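/- Let (A₀, τ_t, φ₀) be a quantum dynamical semigroup with normal invariant state φ₀ and let p be a sub-harmonic projection for (τ_t) (i.e. τ_t(p) ≥ p for all t ≥ 0) such that τ_t(p) → 1 strongly as t → ∞. Then the following are equivalent: (a) ||φ ∘ τ_t − φ₀|| → 0 as t → ∞ for every normal state φ on A₀; (b) ||φᵖ ∘ τᵖ_t − φᵖ₀|| → 0 as t → ∞ for every normal state φᵖ on Aᵖ₀, where Aᵖ₀ = pA₀p, τᵖ_t(x) = pτ_t(pxp)p, and φᵖ₀(x) = φ₀(pxp). -/

import Mathlib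

noncomputable section
open Filter Topology
open scoped ComplexOrder

namespace Paper

local notation "⟪" x ", " y "⟫" => @inner ℂ _ _ x y

variable {H : Type u} [NormedAddCommGroup H] [InnerProductSpace ℂ H] [CompleteSpace H]

abbrev Op (H : Type u) [NormedAddCommGroup H] [InnerProductSpace ℂ H] [CompleteSpace H] :=
  H →L[ℂ] H

structure NormalState (H : Type u) [NormedAddCommGroup H] [InnerProductSpace ℂ H]
    [CompleteSpace H] where
  ξ : ℕ → H
  norm_sum : (∑' n, ‖ξ n‖ ^ 2) = 1

def NormalState.apply (ω : NormalState H) (x : Op H) : ℂ :=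
  ∑' n, ⟪ω.ξ n, x (ω.ξ n)⟫

def bicomm (S : Set (Op H)) : Set (Op H) := Set.centralizer (Set.centralizer S)
def IsVN (S : Set (Op H)) : Prop := (∀ x ∈ S, star x ∈ S) ∧ bicomm S = S
def IsProjection (e : Op H) : Prop := IsSelfAdjoint e ∧ IsIdempotentElem e
def opLE (a b : Op H) : Prop := ContinuousLinearMap.IsPositive (b - a)

def IsCPMap (S : Set (Op H)) (τ : Op H → Op H) : Prop :=
  ∀ (k : ℕ) (a : Fin k → Op H) (v : Fin k → H), (∀ i, a i ∈ S) →
    0 ≤ ∑ i, ∑ j, ⟪v i, τ (star (a i) * a j) (v j)⟫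

def IsNormalMap (S : Set (Op H)) (τ : Op H → Op H) : Prop :=
  ∀ ω : NormalState H, ∃ ω' : NormalState H, ∀ x ∈ S, ω.apply (τ x) = ω'.apply x

/-- A weak*-continuous semigroup of identity preserving completely positive normal maps
on a von Neumann algebra `S`, the time parameter running over `ℝ₊`. -/
structure MarkovSemigroup (S : Set (Op H)) where
  τ : ℝ → Op H → Op H
  maps : ∀ t, 0 ≤ t → ∀ x ∈ S, τ t x ∈ S
  linear : ∀ t, 0 ≤ t → IsLinearMap ℂ (τ t)
  unital : ∀ t, 0 ≤ t → τ t 1 = 1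
  id0 : ∀ x, τ 0 x = x
  comp : ∀ s t, 0 ≤ s → 0 ≤ t → ∀ x ∈ S, τ (s + t) x = τ s (τ t x)
  cp : ∀ t, 0 ≤ t → IsCPMap S (τ t)
  normal : ∀ t, 0 ≤ t → IsNormalMap S (τ t)
  weakCont : ∀ x ∈ S, ∀ ω : NormalState H, ContinuousOn (fun t => ω.apply (τ t x)) (Set.Ici 0)

/-- A single identity preserving completely positive normal map (discrete time). -/
structure MarkovMap (S : Set (Op H)) where
  τ : Op H → Op H
  maps : ∀ x ∈ S, τ x ∈ S
  linear : IsLinearMap ℂ τ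
  unital : τ 1 = 1
  cp : IsCPMap S τ
  normal : IsNormalMap S τ

def InvariantState {S : Set (Op H)} (T : MarkovSemigroup S) (φ : NormalState H) : Prop :=
  ∀ t, 0 ≤ t → ∀ x ∈ S, φ.apply (T.τ t x) = φ.apply x

def FaithfulOn (φ : NormalState H) (S : Set (Op H)) : Prop :=
  ∀ x ∈ S, φ.apply (star x * x) = 0 → x = 0

def ErgodicOn {S : Set (Op H)} (T : MarkovSemigroup S) (S' : Set (Op H)) : Prop :=
  ∀ x ∈ S', (∀ t, 0 ≤ t → T.τ t x = x) → ∃ c : ℂ, x = c • 1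

def MixingOn {S : Set (Op H)} (T : MarkovSemigroup S) (φ : NormalState H)
    (S' : Set (Op H)) : Prop :=
  ∀ x ∈ S', ∀ ω : NormalState H,
    Tendsto (fun t => ω.apply (T.τ t x)) atTop (𝓝 (φ.apply x))

/-- Tomita's modular automorphism group of a faithful normal state, characterized by the
KMS condition. -/
structure ModularGroup (S : Set (Op H)) (φ : NormalState H) where
  σ : ℝ → Op H → Op H
  maps : ∀ s, ∀ x ∈ S, σ s x ∈ S
  linear : ∀ s, IsLinearMap ℂ (σ s)
  mul : ∀ s, ∀ x ∈ S, ∀ y ∈ S, σ s (x * y) = σ s x * σ s y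
  star_map : ∀ s, ∀ x ∈ S, σ s (star x) = star (σ s x)
  zero : ∀ x, σ 0 x = x
  add : ∀ s t, ∀ x ∈ S, σ (s + t) x = σ s (σ t x)
  surj : ∀ s, ∀ x ∈ S, σ s (σ (-s) x) = x
  state : ∀ s, ∀ x ∈ S, φ.apply (σ s x) = φ.apply x
  kms : ∀ x ∈ S, ∀ y ∈ S, ∃ F : ℂ → ℂ,
    ContinuousOn F {z : ℂ | 0 ≤ z.im ∧ z.im ≤ 1} ∧
    DifferentiableOn ℂ F {z : ℂ | 0 < z.im ∧ z.im < 1} ∧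
    (∀ s : ℝ, F s = φ.apply (σ s x * y)) ∧
    (∀ s : ℝ, F (s + Complex.I) = φ.apply (y * σ s x))

/-- The adjoint (time reversed) Markov semigroup of `T` with respect to the faithful
normal invariant state `φ`. -/
structure AdjointSemigroup (S : Set (Op H)) (T : MarkovSemigroup S) (φ : NormalState H) where
  tilde : MarkovSemigroup S
  inv : ∀ t, 0 ≤ t → ∀ x ∈ S, φ.apply (tilde.τ t x) = φ.apply x
  adjoint_rel : ∀ t, 0 ≤ t → ∀ x ∈ S, ∀ y ∈ S,
    φ.apply (tilde.τ t x * y) = φ.apply (x * T.τ t y)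

def Gset {S : Set (Op H)} (T : MarkovSemigroup S) {φ : NormalState H}
    (A : AdjointSemigroup S T φ) : Set (Op H) :=
  {x | x ∈ S ∧ ∀ t, 0 ≤ t → A.tilde.τ t (T.τ t x) = x}

def GtildeSet {S : Set (Op H)} (T : MarkovSemigroup S) {φ : NormalState H}
    (A : AdjointSemigroup S T φ) : Set (Op H) :=
  {x | x ∈ S ∧ ∀ t, 0 ≤ t → T.τ t (A.tilde.τ t x) = x}

def G0set {S : Set (Op H)} (T : MarkovSemigroup S) {φ : NormalState H}
    (A : AdjointSemigroup S T φ) : Set (Op H) :=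
  ⋂ s ∈ Set.Ici (0 : ℝ), T.τ s '' Gset T A


section Aux

variable {H : Type*} [NormedAddCommGroup H] [InnerProductSpace ℂ H] [CompleteSpace H]

lemma IsVN.mul_mem {S : Set (Op H)} (hS : IsVN S) {x y : Op H} (hx : x ∈ S) (hy : y ∈ S) :
    x * y ∈ S := by
  rw [← hS.2] at hx hy ⊢
  exact Set.mul_mem_centralizer hx hy

lemma IsVN.one_sub_mem {S : Set (Op H)} (hS : IsVN S) {p : Op H} (hp : p ∈ S) :
    (1 : Op H) - p ∈ S := by
  rw [← hS.2]
  intro c hc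
  have hcp : p * c = c * p := hc p hp
  show c * (1 - p) = (1 - p) * c
  rw [mul_sub, sub_mul, mul_one, one_mul, hcp]

lemma NormalState.summable_sq (ω : NormalState H) : Summable fun n => ‖ω.ξ n‖ ^ 2 := by
  by_contra h
  have h0 := tsum_eq_zero_of_not_summable h
  rw [ω.norm_sum] at h0
  norm_num at h0

lemma summable_inner {ξ : ℕ → H} (hξ : Summable fun n => ‖ξ n‖ ^ 2) (A : Op H) :
    Summable fun n => ⟪ξ n, A (ξ n)⟫ := by
  apply Summable.of_norm
  apply Summable.of_nonneg_of_le (fun n => norm_nonneg _) (fun n => ?_) (hξ.mul_left ‖A‖)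
  calc ‖⟪ξ n, A (ξ n)⟫‖ ≤ ‖ξ n‖ * ‖A (ξ n)‖ := norm_inner_le_norm _ _
    _ ≤ ‖ξ n‖ * (‖A‖ * ‖ξ n‖) := by gcongr; exact A.le_opNorm _
    _ = ‖A‖ * ‖ξ n‖ ^ 2 := by ring

lemma summable_inner_re {ξ : ℕ → H} (hξ : Summable fun n => ‖ξ n‖ ^ 2) (A : Op H) :
    Summable fun n => (⟪ξ n, A (ξ n)⟫).re :=
  (Complex.reCLM : ℂ →L[ℝ] ℝ).summable (summable_inner hξ A)

lemma re_apply (ω : NormalState H) (A : Op H) :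
    (ω.apply A).re = ∑' n, (⟪ω.ξ n, A (ω.ξ n)⟫).re := by
  exact (Complex.reCLM : ℂ →L[ℝ] ℝ).map_tsum (summable_inner ω.summable_sq A)

lemma NormalState.apply_norm_le (ω : NormalState H) (A : Op H) : ‖ω.apply A‖ ≤ ‖A‖ := by
  have hs : Summable fun n => ‖⟪ω.ξ n, A (ω.ξ n)⟫‖ :=
    (summable_inner ω.summable_sq A).norm
  refine le_trans (norm_tsum_le_tsum_norm hs) ?_
  have hb : ∀ n, ‖⟪ω.ξ n, A (ω.ξ n)⟫‖ ≤ ‖A‖ * ‖ω.ξ n‖ ^ 2 := by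
    intro n
    calc ‖⟪ω.ξ n, A (ω.ξ n)⟫‖ ≤ ‖ω.ξ n‖ * ‖A (ω.ξ n)‖ := norm_inner_le_norm _ _
      _ ≤ ‖ω.ξ n‖ * (‖A‖ * ‖ω.ξ n‖) := by gcongr; exact A.le_opNorm _
      _ = ‖A‖ * ‖ω.ξ n‖ ^ 2 := by ring
  calc (∑' n, ‖⟪ω.ξ n, A (ω.ξ n)⟫‖) ≤ ∑' n, ‖A‖ * ‖ω.ξ n‖ ^ 2 :=
        Summable.tsum_le_tsum hb hs (ω.summable_sq.mul_left ‖A‖)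
    _ = ‖A‖ * ∑' n, ‖ω.ξ n‖ ^ 2 := tsum_mul_left
    _ = ‖A‖ := by rw [ω.norm_sum, mul_one]

lemma cp_pos {S : Set (Op H)} {τ : Op H → Op H} (hcp : IsCPMap S τ) {a : Op H} (ha : a ∈ S)
    (v : H) : 0 ≤ ⟪v, τ (star a * a) v⟫ := by
  simpa using hcp 1 (fun _ => a) (fun _ => v) (fun _ => ha)


lemma cp_star {S : Set (Op H)} {τ : Op H → Op H} (hcp : IsCPMap S τ) (hone : (1 : Op H) ∈ S)
    (hτ1 : τ 1 = 1) {x : Op H} (hx : x ∈ S) (u v : H) :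
    ⟪v, τ (star x) u⟫ = starRingEnd ℂ ⟪u, τ x v⟫ := by
  have key : ∀ w : H, (⟪w, τ x v⟫ + ⟪v, τ (star x) w⟫).im = 0 := by
    intro w
    have h := hcp 2 ![1, x] ![w, v] (by intro i; fin_cases i <;> simpa [hone] using hx)
    simp only [Fin.sum_univ_two, Matrix.cons_val_zero, Matrix.cons_val_one, Matrix.head_cons,
      star_one, one_mul, mul_one] at h
    rw [hτ1] at h
    have him := (Complex.le_def.mp h).2
    have h1 : (⟪w, (1 : Op H) w⟫ : ℂ).im = 0 := by
      rw [ContinuousLinearMap.one_apply]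
      have h0 : ⟪w, w⟫ = ((‖w‖ ^ 2 : ℝ) : ℂ) := by exact_mod_cast inner_self_eq_norm_sq_to_K (𝕜 := ℂ) w
      rw [h0, Complex.ofReal_im]
    have h2 : (⟪v, τ (star x * x) v⟫).im = 0 := by
      have := (Complex.le_def.mp (cp_pos hcp hx v)).2
      simpa using this.symm
    simp only [Complex.add_im, Complex.zero_im] at him h1 h2 ⊢
    linarith [him.symm]
  have k1 := key u
  have k2 := key (Complex.I • u)
  rw [inner_smul_left, map_smul, inner_smul_right] at k2
  simp only [Complex.conj_I, neg_mul, Complex.add_im, Complex.neg_im, Complex.mul_im,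
    Complex.I_re, Complex.I_im, zero_mul, one_mul, zero_add] at k2
  simp only [Complex.add_im] at k1
  apply Complex.ext
  · simp only [Complex.conj_re]
    linarith [k2]
  · simp only [Complex.conj_im]
    linarith [k1]


lemma cp_cs {S : Set (Op H)} {τ : Op H → Op H} (hS : IsVN S) (hcp : IsCPMap S τ)
    (hone : (1 : Op H) ∈ S) (hτ1 : τ 1 = 1) {a b : Op H} (ha : a ∈ S) (hb : b ∈ S)
    (u v : H) :
    ‖⟪u, τ (star a * b) v⟫‖ ^ 2 ≤ (⟪u, τ (star a * a) u⟫).re * (⟪v, τ (star b * b) v⟫).re := by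
  set B := ⟪u, τ (star a * b) v⟫ with hBdef
  set A := (⟪u, τ (star a * a) u⟫).re with hAdef
  set C := (⟪v, τ (star b * b) v⟫).re with hCdef
  have hA : 0 ≤ A := by
    simpa [hAdef] using (Complex.le_def.mp (cp_pos hcp ha u)).1
  have hC : 0 ≤ C := by
    simpa [hCdef] using (Complex.le_def.mp (cp_pos hcp hb v)).1
  have hconj : ⟪v, τ (star b * a) u⟫ = starRingEnd ℂ B := by
    have h1 : star b * a = star (star a * b) := by simp [star_mul]
    rw [h1]
    exact cp_star hcp hone hτ1 (hS.mul_mem (hS.1 a ha) hb) u v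
  have main : ∀ μ : ℂ, 0 ≤ A + 2 * (μ * B).re + Complex.normSq μ * C := by
    intro μ
    have h := hcp 2 ![a, b] ![u, μ • v] (fun i => by fin_cases i <;> simp [ha, hb])
    simp only [Fin.sum_univ_two, Matrix.cons_val_zero, Matrix.cons_val_one, Matrix.head_cons,
      inner_smul_left, inner_smul_right, ContinuousLinearMap.map_smul] at h
    rw [hconj, ← hBdef] at h
    have hre := (Complex.le_def.mp h).1
    simp only [Complex.zero_re, Complex.add_re] at hre
    have e1 : (starRingEnd ℂ μ * starRingEnd ℂ B).re = (μ * B).re := by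
      rw [← map_mul]; exact Complex.conj_re _
    have e2 : (μ * (starRingEnd ℂ μ * ⟪v, τ (star b * b) v⟫)).re
        = Complex.normSq μ * C := by
      rw [← mul_assoc, Complex.mul_conj, Complex.re_ofReal_mul, hCdef]
    rw [e1, e2] at hre
    linarith [hre]
  by_cases hB0 : B = 0
  · rw [hB0]
    simpa using mul_nonneg hA hC
  have hnB : ‖B‖ ≠ 0 := norm_ne_zero_iff.mpr hB0
  have quad : ∀ t : ℝ, 0 ≤ C * (t * t) + (-(2 * ‖B‖)) * t + A := by
    intro t
    have hμ := main (-(t : ℂ) * starRingEnd ℂ B * ((‖B‖ : ℝ) : ℂ)⁻¹)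
    have hBB : starRingEnd ℂ B * B = ((‖B‖ : ℝ) : ℂ) * ((‖B‖ : ℝ) : ℂ) := by
      rw [mul_comm, Complex.mul_conj']
      push_cast
      ring
    have e3 : (-(t : ℂ) * starRingEnd ℂ B * ((‖B‖ : ℝ) : ℂ)⁻¹ * B) = ((-(t * ‖B‖) : ℝ) : ℂ) := by
      have hnB' : ((‖B‖ : ℝ) : ℂ) ≠ 0 := by exact_mod_cast hnB
      rw [show -(t : ℂ) * starRingEnd ℂ B * ((‖B‖ : ℝ) : ℂ)⁻¹ * B
            = -(t : ℂ) * (B * starRingEnd ℂ B) * ((‖B‖ : ℝ) : ℂ)⁻¹ by ring,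
        Complex.mul_conj']
      have habs : ‖B‖ ≠ 0 := hnB
      push_cast
      rw [pow_two]
      field_simp
    have e4 : Complex.normSq (-(t : ℂ) * starRingEnd ℂ B * ((‖B‖ : ℝ) : ℂ)⁻¹) = t * t := by
      rw [Complex.normSq_mul, Complex.normSq_mul, Complex.normSq_neg, Complex.normSq_conj,
        Complex.normSq_inv, Complex.normSq_ofReal, Complex.normSq_ofReal]
      have : Complex.normSq B = ‖B‖ * ‖B‖ := by
        rw [Complex.normSq_eq_norm_sq]; ring
      rw [this]
      have h1 : ‖B‖ * ‖B‖ ≠ 0 := mul_ne_zero hnB hnB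
      field_simp
    rw [e3, e4] at hμ
    simp only [Complex.ofReal_re] at hμ
    linarith [hμ]
  have hd := discrim_le_zero quad
  rw [discrim] at hd
  nlinarith [hd, norm_nonneg B]


lemma proj_adjoint {p : Op H} (hproj : IsProjection p) (u w : H) :
    ⟪p u, w⟫ = ⟪u, p w⟫ := by
  have h : ContinuousLinearMap.adjoint p = p := by
    rw [← ContinuousLinearMap.star_eq_adjoint, hproj.1.star_eq]
  conv_rhs => rw [← h]
  rw [ContinuousLinearMap.adjoint_inner_right]

lemma proj_apply_apply {p : Op H} (hproj : IsProjection p) (v : H) : p (p v) = p v := by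
  have h := hproj.2
  rw [IsIdempotentElem] at h
  conv_rhs => rw [← h]
  rfl

lemma proj_norm_le {p : Op H} (hproj : IsProjection p) (v : H) : ‖p v‖ ≤ ‖v‖ := by
  have h1 : (‖p v‖ : ℝ) ^ 2 = (⟪p v, p v⟫).re := by
    rw [inner_self_eq_norm_sq_to_K (𝕜 := ℂ)]
    norm_cast
  have h2 : ⟪p v, p v⟫ = ⟪v, p v⟫ := by
    rw [proj_adjoint hproj, proj_apply_apply hproj]
  have h3 : ‖⟪v, p v⟫‖ ≤ ‖v‖ * ‖p v‖ := norm_inner_le_norm _ _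
  have h4 : (⟪v, p v⟫).re ≤ ‖v‖ * ‖p v‖ := le_trans (Complex.re_le_norm _) (by
    exact h3)
  nlinarith [norm_nonneg (p v), norm_nonneg v, h1, h2 ▸ h1]

lemma proj_pyth {p : Op H} (hproj : IsProjection p) (v : H) :
    ‖v - p v‖ ^ 2 = ‖v‖ ^ 2 - ‖p v‖ ^ 2 := by
  have horth : ⟪p v, v - p v⟫ = 0 := by
    rw [inner_sub_right, proj_adjoint hproj, proj_adjoint hproj, proj_apply_apply hproj,
      sub_self]
  have h := norm_add_sq (𝕜 := ℂ) (p v) (v - p v)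
  rw [horth] at h
  simp only [map_zero, mul_zero, add_zero] at h
  have h2 : p v + (v - p v) = v := by abel
  rw [h2] at h
  linarith

lemma supported_apply {p : Op H} (hproj : IsProjection p) (ω : NormalState H)
    (hsupp : ∀ n, p (ω.ξ n) = ω.ξ n) (z : Op H) :
    ω.apply (p * z * p) = ω.apply z := by
  unfold NormalState.apply
  apply tsum_congr
  intro n
  have h1 : (p * z * p) (ω.ξ n) = p (z (p (ω.ξ n))) := rfl
  rw [h1, hsupp n, ← proj_adjoint hproj, hsupp n]

lemma tsum_cs {a b : ℕ → ℝ} (ha : ∀ n, 0 ≤ a n) (hb : ∀ n, 0 ≤ b n)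
    (ha2 : Summable fun n => a n ^ 2) (hb2 : Summable fun n => b n ^ 2) :
    ∑' n, a n * b n ≤ Real.sqrt (∑' n, a n ^ 2) * Real.sqrt (∑' n, b n ^ 2) := by
  have hab : Summable fun n => a n * b n := by
    apply Summable.of_nonneg_of_le (fun n => mul_nonneg (ha n) (hb n)) (fun n => ?_)
      ((ha2.add hb2).div_const 2)
    have := two_mul_le_add_sq (a n) (b n)
    linarith
  apply Summable.tsum_le_of_sum_le hab
  intro s
  have h1 : (∑ i ∈ s, a i * b i) ^ 2 ≤ (∑ i ∈ s, a i ^ 2) * ∑ i ∈ s, b i ^ 2 :=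
    Finset.sum_mul_sq_le_sq_mul_sq s a b
  have h2 : (∑ i ∈ s, a i ^ 2) ≤ ∑' n, a n ^ 2 := Summable.sum_le_tsum s (fun i _ => sq_nonneg _) ha2
  have h3 : (∑ i ∈ s, b i ^ 2) ≤ ∑' n, b n ^ 2 := Summable.sum_le_tsum s (fun i _ => sq_nonneg _) hb2
  have h4 : 0 ≤ ∑ i ∈ s, a i * b i := Finset.sum_nonneg fun i _ => mul_nonneg (ha i) (hb i)
  have h5 := Real.sqrt_le_sqrt h1
  rw [Real.sqrt_sq h4, Real.sqrt_mul (Finset.sum_nonneg fun i _ => sq_nonneg (a i))] at h5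
  refine le_trans h5 ?_
  exact mul_le_mul (Real.sqrt_le_sqrt h2) (Real.sqrt_le_sqrt h3) (Real.sqrt_nonneg _)
    (Real.sqrt_nonneg _)


lemma star_proj_mul_self {p : Op H} (hproj : IsProjection p) : star p * p = p := by
  rw [hproj.1.star_eq]
  exact hproj.2

lemma inner_tau_p_nonneg {S : Set (Op H)} {τ : Op H → Op H} (hcp : IsCPMap S τ)
    {p : Op H} (hp : p ∈ S) (hproj : IsProjection p) (v : H) :
    0 ≤ (⟪v, τ p v⟫).re ∧ (⟪v, τ p v⟫).im = 0 := by
  have h := cp_pos hcp hp v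
  rw [star_proj_mul_self hproj] at h
  exact ⟨by simpa using (Complex.le_def.mp h).1, by simpa using (Complex.le_def.mp h).2.symm⟩

lemma reach_one {S : Set (Op H)} (T : MarkovSemigroup S) {p : Op H} (hp : p ∈ S)
    (hproj : IsProjection p)
    (hlim : ∀ v : H, Tendsto (fun t => T.τ t p v) atTop (𝓝 v))
    (ψ : NormalState H) {δ : ℝ} (hδ : 0 < δ) :
    ∃ s, 0 ≤ s ∧ 1 - δ ≤ (ψ.apply (T.τ s p)).re := by
  have hsum := ψ.summable_sq
  have hhs : HasSum (fun n => ‖ψ.ξ n‖ ^ 2) 1 := by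
    have := hsum.hasSum
    rwa [ψ.norm_sum] at this
  have hF : ∀ᶠ F in atTop, 1 - δ / 2 < ∑ n ∈ F, ‖ψ.ξ n‖ ^ 2 :=
    hhs.eventually (eventually_gt_nhds (by linarith))
  obtain ⟨F, hF⟩ := hF.exists
  set δ' := δ / (2 * (F.card + 1)) with hδ'
  have hδ'pos : 0 < δ' := by positivity
  have hn : ∀ n : ℕ, Tendsto (fun s => (⟪ψ.ξ n, T.τ s p (ψ.ξ n)⟫).re) atTop
      (𝓝 (‖ψ.ξ n‖ ^ 2)) := by
    intro n
    have h1 : Tendsto (fun s => ⟪ψ.ξ n, T.τ s p (ψ.ξ n)⟫) atTop (𝓝 ⟪ψ.ξ n, ψ.ξ n⟫) :=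
      Filter.Tendsto.inner tendsto_const_nhds (hlim (ψ.ξ n))
    have h2 := (Complex.continuous_re.tendsto _).comp h1
    have h3 : (⟪ψ.ξ n, ψ.ξ n⟫ : ℂ).re = ‖ψ.ξ n‖ ^ 2 := by
      rw [inner_self_eq_norm_sq_to_K (𝕜 := ℂ)]
      norm_cast
    rwa [h3] at h2
  have hev : ∀ᶠ s in atTop, ∀ n ∈ F, ‖ψ.ξ n‖ ^ 2 - δ' ≤ (⟪ψ.ξ n, T.τ s p (ψ.ξ n)⟫).re := by
    rw [Filter.eventually_all_finset]
    intro n _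
    exact (hn n).eventually (Filter.Tendsto.eventually_const_le (by linarith) tendsto_id) |>.mono
      (fun s hs => hs)
  obtain ⟨s, hs, hs0⟩ := (hev.and (eventually_ge_atTop (0 : ℝ))).exists
  refine ⟨s, hs0, ?_⟩
  have hpos : ∀ n, 0 ≤ (⟪ψ.ξ n, T.τ s p (ψ.ξ n)⟫).re :=
    fun n => (inner_tau_p_nonneg (T.cp s hs0) hp hproj (ψ.ξ n)).1
  have hsumre : Summable fun n => (⟪ψ.ξ n, T.τ s p (ψ.ξ n)⟫).re :=
    summable_inner_re hsum (T.τ s p)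
  rw [re_apply]
  have h1 : ∑ n ∈ F, (‖ψ.ξ n‖ ^ 2 - δ') ≤ ∑ n ∈ F, (⟪ψ.ξ n, T.τ s p (ψ.ξ n)⟫).re :=
    Finset.sum_le_sum fun n hn' => hs n hn'
  have h2 : (∑ n ∈ F, (⟪ψ.ξ n, T.τ s p (ψ.ξ n)⟫).re) ≤ ∑' n, (⟪ψ.ξ n, T.τ s p (ψ.ξ n)⟫).re :=
    Summable.sum_le_tsum F (fun n _ => hpos n) hsumre
  have h3 : ∑ n ∈ F, (‖ψ.ξ n‖ ^ 2 - δ') = (∑ n ∈ F, ‖ψ.ξ n‖ ^ 2) - F.card * δ' := by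
    rw [Finset.sum_sub_distrib]
    simp [mul_comm]
  have key : δ' * (2 * ((F.card : ℝ) + 1)) = δ := by
    rw [hδ']
    field_simp
  have h4 : (F.card : ℝ) * δ' ≤ δ / 2 := by
    nlinarith [hδ'pos.le, Nat.cast_nonneg (α := ℝ) F.card, key]
  have h5 : ∑ n ∈ F, (‖ψ.ξ n‖ ^ 2 - δ') ≤ ∑' n, (⟪ψ.ξ n, T.τ s p (ψ.ξ n)⟫).re :=
    le_trans h1 h2
  rw [h3] at h5
  linarith


lemma invariant_supported {S : Set (Op H)} (T : MarkovSemigroup S) {φ : NormalState H}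
    (hinv : InvariantState T φ) {p : Op H} (hp : p ∈ S) (hproj : IsProjection p)
    (hlim : ∀ v : H, Tendsto (fun t => T.τ t p v) atTop (𝓝 v)) :
    ∀ n, p (φ.ξ n) = φ.ξ n := by
  have hone : ∀ δ : ℝ, 0 < δ → 1 - δ ≤ (φ.apply p).re := by
    intro δ hδ
    obtain ⟨s, hs0, hs⟩ := reach_one T hp hproj hlim φ hδ
    rwa [hinv s hs0 p hp] at hs
  have h1 : 1 ≤ (φ.apply p).re := by
    by_contra h
    push_neg at h
    have := hone ((1 - (φ.apply p).re) / 2) (by linarith)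
    linarith
  have hterm : ∀ n, (⟪φ.ξ n, p (φ.ξ n)⟫).re = ‖p (φ.ξ n)‖ ^ 2 := by
    intro n
    have e : ⟪p (φ.ξ n), p (φ.ξ n)⟫ = ⟪φ.ξ n, p (φ.ξ n)⟫ := by
      rw [proj_adjoint hproj, proj_apply_apply hproj]
    rw [← e, inner_self_eq_norm_sq_to_K (𝕜 := ℂ)]
    norm_cast
  have hsump : Summable fun n => ‖p (φ.ξ n)‖ ^ 2 :=
    Summable.of_nonneg_of_le (fun n => sq_nonneg _)
      (fun n => by have := proj_norm_le hproj (φ.ξ n); nlinarith [norm_nonneg (p (φ.ξ n))])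
      φ.summable_sq
  have happ : (φ.apply p).re = ∑' n, ‖p (φ.ξ n)‖ ^ 2 := by
    rw [re_apply]
    exact tsum_congr hterm
  have hdiff : ∀ n, 0 ≤ ‖φ.ξ n‖ ^ 2 - ‖p (φ.ξ n)‖ ^ 2 := fun n => by
    rw [← proj_pyth hproj]; positivity
  have hsdiff : Summable fun n => ‖φ.ξ n‖ ^ 2 - ‖p (φ.ξ n)‖ ^ 2 := φ.summable_sq.sub hsump
  have htot : ∑' n, (‖φ.ξ n‖ ^ 2 - ‖p (φ.ξ n)‖ ^ 2) ≤ 0 := by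
    rw [Summable.tsum_sub φ.summable_sq hsump, φ.norm_sum, ← happ]
    linarith
  intro n
  have h0 : ‖φ.ξ n‖ ^ 2 - ‖p (φ.ξ n)‖ ^ 2 = 0 :=
    le_antisymm (le_trans (Summable.le_tsum hsdiff n (fun j _ => hdiff j)) htot) (hdiff n)
  rw [← proj_pyth hproj] at h0
  have h2 := pow_eq_zero_iff (n := 2) (by norm_num) |>.mp h0
  rw [norm_eq_zero, sub_eq_zero] at h2
  exact h2.symm


lemma re_inner_self (u : H) : (⟪u, u⟫).re = ‖u‖ ^ 2 := by
  rw [inner_self_eq_norm_sq_to_K (𝕜 := ℂ)]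
  norm_cast

lemma abs_le_of_sq_le {B u R : ℝ} (hu : 0 ≤ u) (hB : 0 ≤ B) (h : B ^ 2 ≤ u ^ 2 * R) :
    B ≤ u * Real.sqrt R := by
  have h1 := Real.sqrt_le_sqrt h
  rwa [Real.sqrt_sq hB, Real.sqrt_mul (sq_nonneg u), Real.sqrt_sq hu] at h1

lemma norm_pxp_le {p : Op H} (hproj : IsProjection p) (z : Op H) : ‖p * z * p‖ ≤ ‖z‖ := by
  apply ContinuousLinearMap.opNorm_le_bound _ (norm_nonneg z)
  intro v
  calc ‖(p * z * p) v‖ = ‖p (z (p v))‖ := rfl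
    _ ≤ ‖z (p v)‖ := proj_norm_le hproj _
    _ ≤ ‖z‖ * ‖p v‖ := z.le_opNorm _
    _ ≤ ‖z‖ * ‖v‖ := by
        have := proj_norm_le hproj v
        have hz := norm_nonneg z
        nlinarith

lemma apply_sub (ω : NormalState H) (A B : Op H) :
    ω.apply (A - B) = ω.apply A - ω.apply B := by
  unfold NormalState.apply
  rw [← Summable.tsum_sub (summable_inner ω.summable_sq A) (summable_inner ω.summable_sq B)]
  apply tsum_congr
  intro n
  rw [ContinuousLinearMap.sub_apply, inner_sub_right]

lemma apply_add (ω : NormalState H) (A B : Op H) :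
    ω.apply (A + B) = ω.apply A + ω.apply B := by
  unfold NormalState.apply
  rw [← Summable.tsum_add (summable_inner ω.summable_sq A) (summable_inner ω.summable_sq B)]
  apply tsum_congr
  intro n
  rw [ContinuousLinearMap.add_apply, inner_add_right]

lemma apply_one (ω : NormalState H) : ω.apply 1 = 1 := by
  unfold NormalState.apply
  have h1 : ∀ n, ⟪ω.ξ n, (1 : Op H) (ω.ξ n)⟫ = ((‖ω.ξ n‖ ^ 2 : ℝ) : ℂ) := by
    intro n
    rw [ContinuousLinearMap.one_apply]
    exact_mod_cast inner_self_eq_norm_sq_to_K (𝕜 := ℂ) (ω.ξ n)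
  rw [tsum_congr h1]
  calc (∑' n, ((‖ω.ξ n‖ ^ 2 : ℝ) : ℂ)) = (((∑' n, ‖ω.ξ n‖ ^ 2 : ℝ)) : ℂ) := by
        simpa using (Complex.ofRealCLM.map_tsum ω.summable_sq).symm
    _ = 1 := by rw [ω.norm_sum]; norm_cast

lemma one_sub_proj {p : Op H} (hproj : IsProjection p) : IsProjection ((1 : Op H) - p) := by
  constructor
  · have h1 : IsSelfAdjoint (1 : Op H) := star_one _
    exact h1.sub hproj.1
  · have h := hproj.2
    rw [IsIdempotentElem] at h ⊢
    rw [mul_sub, sub_mul, sub_mul, one_mul, mul_one, h]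
    abel

lemma supp_zero {S : Set (Op H)} (hS : IsVN S) (hone : (1 : Op H) ∈ S)
    (T : MarkovSemigroup S) {p : Op H} (hp : p ∈ S) (hproj : IsProjection p)
    (hsub : ∀ t, 0 ≤ t → opLE p (T.τ t p)) {r : ℝ} (hr : 0 ≤ r)
    (ω : NormalState H) (hsupp : ∀ n, p (ω.ξ n) = ω.ξ n) :
    ∀ n, (⟪ω.ξ n, (T.τ r ((1 : Op H) - p)) (ω.ξ n)⟫).re = 0 := by
  have hqS : (1 : Op H) - p ∈ S := hS.one_sub_mem hp
  have hqproj := one_sub_proj hproj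
  have hcp := T.cp r hr
  have hpos : ∀ n, 0 ≤ (⟪ω.ξ n, (T.τ r ((1 : Op H) - p)) (ω.ξ n)⟫).re :=
    fun n => (inner_tau_p_nonneg hcp hqS hqproj (ω.ξ n)).1
  -- the total sum is ≤ 0
  have hτq : T.τ r ((1 : Op H) - p) = 1 - T.τ r p := by
    rw [(T.linear r hr).map_sub, T.unital r hr]
  have hsubr := hsub r hr
  have hsub' : ∀ n, ‖ω.ξ n‖ ^ 2 ≤ (⟪ω.ξ n, (T.τ r p) (ω.ξ n)⟫).re := by
    intro n
    have h2 := hsubr.2 (ω.ξ n)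
    rw [ContinuousLinearMap.reApplyInnerSelf_apply] at h2
    have h3 : RCLike.re (⟪(T.τ r p - p) (ω.ξ n), ω.ξ n⟫ : ℂ)
        = (⟪ω.ξ n, (T.τ r p - p) (ω.ξ n)⟫).re := inner_re_symm _ _
    rw [h3] at h2
    rw [ContinuousLinearMap.sub_apply, inner_sub_right] at h2
    have h4 : ⟪ω.ξ n, p (ω.ξ n)⟫ = ⟪ω.ξ n, ω.ξ n⟫ := by rw [hsupp n]
    rw [Complex.sub_re, h4] at h2
    have h5 := re_inner_self (ω.ξ n)
    linarith
  have htot : ∑' n, (⟪ω.ξ n, (T.τ r ((1 : Op H) - p)) (ω.ξ n)⟫).re ≤ 0 := by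
    have he : (ω.apply (T.τ r ((1 : Op H) - p))).re = 1 - (ω.apply (T.τ r p)).re := by
      rw [hτq, apply_sub, apply_one, Complex.sub_re, Complex.one_re]
    have hge : 1 ≤ (ω.apply (T.τ r p)).re := by
      rw [re_apply]
      have h6 : (1 : ℝ) = ∑' n, ‖ω.ξ n‖ ^ 2 := ω.norm_sum.symm
      rw [h6]
      exact Summable.tsum_le_tsum hsub' ω.summable_sq (summable_inner_re ω.summable_sq _)
    rw [← re_apply, he]
    linarith
  intro n
  refine le_antisymm ?_ (hpos n)
  exact le_trans (Summable.le_tsum (summable_inner_re ω.summable_sq _) n (fun j _ => hpos j)) htot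

lemma cut_invariant {S : Set (Op H)} (hS : IsVN S) (hone : (1 : Op H) ∈ S)
    (T : MarkovSemigroup S) {p : Op H} (hp : p ∈ S) (hproj : IsProjection p)
    (hsub : ∀ t, 0 ≤ t → opLE p (T.τ t p)) {r : ℝ} (hr : 0 ≤ r)
    (ω : NormalState H) (hsupp : ∀ n, p (ω.ξ n) = ω.ξ n) {w : Op H} (hw : w ∈ S) :
    ω.apply (T.τ r w) = ω.apply (T.τ r (p * w * p)) := by
  have hqS : (1 : Op H) - p ∈ S := hS.one_sub_mem hp
  have hqproj := one_sub_proj hproj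
  have hcp := T.cp r hr
  have hτ1 := T.unital r hr
  have h0 := supp_zero hS hone T hp hproj hsub hr ω hsupp
  have hdecomp : w = p * w * p + (((1 : Op H) - p) * w + p * w * ((1 : Op H) - p)) := by
    rw [sub_mul, mul_sub, one_mul, mul_one]
    abel
  have hlin := T.linear r hr
  have hz1 : ω.apply (T.τ r (((1 : Op H) - p) * w)) = 0 := by
    have hterm : ∀ n, ⟪ω.ξ n, (T.τ r (((1 : Op H) - p) * w)) (ω.ξ n)⟫ = 0 := by
      intro n
      have h := cp_cs hS hcp hone hτ1 hqS hw (ω.ξ n) (ω.ξ n)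
      rw [star_proj_mul_self hqproj, hqproj.1.star_eq, h0 n, zero_mul] at h
      have h2 := pow_eq_zero_iff (n := 2) two_ne_zero |>.mp (le_antisymm h (sq_nonneg _))
      rwa [norm_eq_zero] at h2
    unfold NormalState.apply
    rw [tsum_congr hterm]
    exact tsum_zero
  have hz2 : ω.apply (T.τ r (p * w * ((1 : Op H) - p))) = 0 := by
    have hterm : ∀ n, ⟪ω.ξ n, (T.τ r (p * w * ((1 : Op H) - p))) (ω.ξ n)⟫ = 0 := by
      intro n
      have h := cp_cs hS hcp hone hτ1 (hS.mul_mem (hS.1 w hw) hp) hqS (ω.ξ n) (ω.ξ n)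
      have hsw : star (star w * p) = p * w := by
        rw [star_mul, star_star, hproj.1.star_eq]
      rw [star_proj_mul_self hqproj, hsw, h0 n, mul_zero] at h
      have h2 := pow_eq_zero_iff (n := 2) two_ne_zero |>.mp (le_antisymm h (sq_nonneg _))
      rwa [norm_eq_zero] at h2
    unfold NormalState.apply
    rw [tsum_congr hterm]
    exact tsum_zero
  calc ω.apply (T.τ r w)
      = ω.apply (T.τ r (p * w * p + (((1 : Op H) - p) * w + p * w * ((1 : Op H) - p)))) := by
        rw [← hdecomp]
    _ = ω.apply (T.τ r (p * w * p)) + (ω.apply (T.τ r (((1 : Op H) - p) * w))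
          + ω.apply (T.τ r (p * w * ((1 : Op H) - p)))) := by
        rw [hlin.map_add, hlin.map_add, apply_add, apply_add]
    _ = ω.apply (T.τ r (p * w * p)) := by rw [hz1, hz2]; ring


lemma summable_mul_of_sq {a b : ℕ → ℝ} (ha2 : Summable fun n => a n ^ 2)
    (hb2 : Summable fun n => b n ^ 2) : Summable fun n => a n * b n := by
  apply Summable.of_norm
  apply Summable.of_nonneg_of_le (fun n => norm_nonneg _) (fun n => ?_)
    ((ha2.add hb2).div_const 2)
  have h1 := sq_nonneg (|a n| - |b n|)
  rw [Real.norm_eq_abs, abs_mul]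
  have h2 : |a n| ^ 2 = a n ^ 2 := sq_abs _
  have h3 : |b n| ^ 2 = b n ^ 2 := sq_abs _
  nlinarith [abs_nonneg (a n), abs_nonneg (b n)]

end Aux


set_option maxHeartbeats 2000000 in
/-- Theorem 2.4.  Let `p` be a sub-harmonic projection
(`τ_t(p) ≥ p`) for a quantum dynamical semigroup `(A₀,τ_t,φ₀)` with normal invariant
state `φ₀`, such that `τ_t(p) → 1` strongly.  Then `‖φ ∘ τ_t − φ₀‖ → 0` for every normal
state `φ` on `A₀` if and only if `‖φᵖ ∘ τᵖ_t − φᵖ₀‖ → 0` for every normal state `φᵖ` on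
the reduced algebra `Aᵖ₀ = pA₀p`, where `τᵖ_t(x) = pτ_t(pxp)p` and `φᵖ₀(x) = φ₀(pxp)`. -/
theorem statement3
    {H : Type u} [NormedAddCommGroup H] [InnerProductSpace ℂ H] [CompleteSpace H]
    (S : Set (Op H)) (hS : IsVN S) (hone : (1 : Op H) ∈ S)
    (T : MarkovSemigroup S) (φ : NormalState H)
    (hinv : InvariantState T φ)
    (p : Op H) (hp : p ∈ S) (hproj : IsProjection p)
    (hsub : ∀ t, 0 ≤ t → opLE p (T.τ t p))
    (hlim : ∀ v : H, Tendsto (fun t => T.τ t p v) atTop (𝓝 v)) :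
    ((∀ ω : NormalState H, ∀ ε : ℝ, 0 < ε → ∃ T₀ : ℝ, ∀ t, T₀ ≤ t →
        ∀ x ∈ S, ‖x‖ ≤ 1 → ‖ω.apply (T.τ t x) - φ.apply x‖ ≤ ε) ↔
      (∀ ω : NormalState H, (∀ n, p (ω.ξ n) = ω.ξ n) →
        ∀ ε : ℝ, 0 < ε → ∃ T₀ : ℝ, ∀ t, T₀ ≤ t →
          ∀ x ∈ S, ‖x‖ ≤ 1 →
            ‖ω.apply (p * T.τ t (p * x * p) * p) - φ.apply (p * x * p)‖ ≤ ε)) := by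
  constructor
  · -- forward direction
    intro ha ω hsupp ε hε
    obtain ⟨T₀, hT₀⟩ := ha ω ε hε
    refine ⟨T₀, fun t ht x hxS hxn => ?_⟩
    have hpxp : p * x * p ∈ S := hS.mul_mem (hS.mul_mem hp hxS) hp
    have hn1 : ‖p * x * p‖ ≤ 1 := le_trans (norm_pxp_le hproj x) hxn
    have h := hT₀ t ht (p * x * p) hpxp hn1
    rw [supported_apply hproj ω hsupp (T.τ t (p * x * p))]
    exact h
  · -- reverse direction
    intro hb ω ε hε
    have hφs : ∀ n, p (φ.ξ n) = φ.ξ n := invariant_supported T hinv hp hproj hlim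
    have hε4 : 0 < ε / 4 := by linarith
    set ε' : ℝ := min (ε / 4) 1 with hε'def
    have hε'pos : 0 < ε' := lt_min hε4 one_pos
    have hε'le : ε' ≤ ε / 4 := min_le_left _ _
    have hε'1 : ε' ≤ 1 := min_le_right _ _
    set δ : ℝ := min ((ε / 10) ^ 2) (min (ε / 4) (1 / 2)) with hδdef
    have hδpos : 0 < δ := lt_min (by positivity) (lt_min hε4 (by norm_num))
    have hδhalf : δ ≤ 1 / 2 := le_trans (min_le_right _ _) (min_le_right _ _)
    have hδε4 : δ ≤ ε / 4 := le_trans (min_le_right _ _) (min_le_left _ _)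
    have hsqrtδ : Real.sqrt δ ≤ ε / 10 := by
      have h1 : δ ≤ (ε / 10) ^ 2 := min_le_left _ _
      have h2 := Real.sqrt_le_sqrt h1
      rwa [Real.sqrt_sq (by linarith)] at h2
    obtain ⟨s, hs0, hsc⟩ := reach_one T hp hproj hlim ω hδpos
    obtain ⟨ω'', hω''⟩ := T.normal s hs0 ω
    have hsumξ : Summable fun n => ‖ω''.ξ n‖ ^ 2 := ω''.summable_sq
    have hsumpξ : Summable fun n => ‖p (ω''.ξ n)‖ ^ 2 :=
      Summable.of_nonneg_of_le (fun n => sq_nonneg _)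
        (fun n => by
          have := proj_norm_le hproj (ω''.ξ n)
          nlinarith [norm_nonneg (p (ω''.ξ n))]) hsumξ
    set c : ℝ := ∑' n, ‖p (ω''.ξ n)‖ ^ 2 with hcdef
    have happ_p : ω''.apply p = ((c : ℝ) : ℂ) := by
      unfold NormalState.apply
      have h1 : ∀ n, ⟪ω''.ξ n, p (ω''.ξ n)⟫ = ((‖p (ω''.ξ n)‖ ^ 2 : ℝ) : ℂ) := by
        intro n
        have e : ⟪p (ω''.ξ n), p (ω''.ξ n)⟫ = ⟪ω''.ξ n, p (ω''.ξ n)⟫ := by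
          rw [proj_adjoint hproj, proj_apply_apply hproj]
        rw [← e]
        exact_mod_cast inner_self_eq_norm_sq_to_K (𝕜 := ℂ) _
      rw [tsum_congr h1]
      simpa using (Complex.ofRealCLM.map_tsum hsumpξ).symm
    have hc_ge : 1 - δ ≤ c := by
      have h1 := hω'' p hp
      rw [h1, happ_p] at hsc
      simpa using hsc
    have hc_le : c ≤ 1 := by
      have h1 := Summable.tsum_le_tsum (fun n => by
          have := proj_norm_le hproj (ω''.ξ n)
          nlinarith [norm_nonneg (p (ω''.ξ n))]) hsumpξ hsumξ
      rwa [ω''.norm_sum] at h1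
    have hcpos : 0 < c := by linarith
    -- construction of the reduced normal state ω'
    have hnorm' : (∑' n, ‖(((Real.sqrt c)⁻¹ : ℝ) : ℂ) • p (ω''.ξ n)‖ ^ 2) = 1 := by
      have h1 : ∀ n, ‖(((Real.sqrt c)⁻¹ : ℝ) : ℂ) • p (ω''.ξ n)‖ ^ 2
          = c⁻¹ * ‖p (ω''.ξ n)‖ ^ 2 := by
        intro n
        rw [norm_smul, mul_pow, Complex.norm_real, Real.norm_eq_abs,
          abs_of_nonneg (by positivity), ← Real.sqrt_inv, Real.sq_sqrt (by positivity)]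
      rw [tsum_congr h1, tsum_mul_left, ← hcdef, inv_mul_cancel₀ (ne_of_gt hcpos)]
    set ω' : NormalState H := ⟨fun n => (((Real.sqrt c)⁻¹ : ℝ) : ℂ) • p (ω''.ξ n), hnorm'⟩
      with hω'def
    have hsupp' : ∀ n, p (ω'.ξ n) = ω'.ξ n := by
      intro n
      show p ((((Real.sqrt c)⁻¹ : ℝ) : ℂ) • p (ω''.ξ n)) = _
      rw [map_smul, proj_apply_apply hproj]
    have hω'apply : ∀ z : Op H, ω''.apply (p * z * p) = ((c : ℝ) : ℂ) * ω'.apply z := by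
      intro z
      have h1 : ∀ n, ⟪ω'.ξ n, z (ω'.ξ n)⟫
          = (((c⁻¹ : ℝ)) : ℂ) * ⟪ω''.ξ n, (p * z * p) (ω''.ξ n)⟫ := by
        intro n
        show ⟪(((Real.sqrt c)⁻¹ : ℝ) : ℂ) • p (ω''.ξ n),
          z ((((Real.sqrt c)⁻¹ : ℝ) : ℂ) • p (ω''.ξ n))⟫ = _
        rw [map_smul, inner_smul_left, inner_smul_right, Complex.conj_ofReal]
        have h2 : ⟪ω''.ξ n, (p * z * p) (ω''.ξ n)⟫ = ⟪p (ω''.ξ n), z (p (ω''.ξ n))⟫ := by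
          rw [show (p * z * p) (ω''.ξ n) = p (z (p (ω''.ξ n))) from rfl,
            ← proj_adjoint hproj]
        have h3 : ((((Real.sqrt c)⁻¹ : ℝ)) : ℂ) * (((((Real.sqrt c)⁻¹ : ℝ)) : ℂ)
            * ⟪p (ω''.ξ n), z (p (ω''.ξ n))⟫)
            = (((c⁻¹ : ℝ)) : ℂ) * ⟪p (ω''.ξ n), z (p (ω''.ξ n))⟫ := by
          rw [← mul_assoc, ← Complex.ofReal_mul, ← mul_inv, Real.mul_self_sqrt hcpos.le]
        rw [h3, h2]
      have h4 : ω'.apply z = (((c⁻¹ : ℝ)) : ℂ) * ω''.apply (p * z * p) := by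
        unfold NormalState.apply
        rw [tsum_congr h1, tsum_mul_left]
      rw [h4, ← mul_assoc, ← Complex.ofReal_mul, mul_inv_cancel₀ (ne_of_gt hcpos)]
      norm_num
    obtain ⟨T₀', hT₀'⟩ := hb ω' hsupp' ε' hε'pos
    refine ⟨s + max T₀' 0, fun t ht x hxS hxn => ?_⟩
    have hr0 : 0 ≤ t - s := by
      have := le_max_right T₀' 0
      linarith
    have hrT : T₀' ≤ t - s := by
      have := le_max_left T₀' 0
      linarith
    -- memberships
    have hxs : star x ∈ S := hS.1 x hxS
    have hxx : x * star x ∈ S := hS.mul_mem hxS hxs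
    have hsxx : star x * x ∈ S := hS.mul_mem hxs hxS
    have hpxp : p * x * p ∈ S := hS.mul_mem (hS.mul_mem hp hxS) hp
    have hcp := T.cp (t - s) hr0
    have hτ1 := T.unital (t - s) hr0
    have hA : ω.apply (T.τ t x) = ω''.apply (T.τ (t - s) x) := by
      have h1 : t = s + (t - s) := by ring
      rw [show T.τ t x = T.τ (s + (t - s)) x by rw [← h1],
        T.comp s (t - s) hs0 hr0 x hxS]
      exact hω'' _ (T.maps (t - s) hr0 x hxS)
    -- positivity facts
    have hpos1 : ∀ v : H, 0 ≤ (⟪v, (T.τ (t - s) (star x * x)) v⟫).re := fun v => by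
      simpa using (Complex.le_def.mp (cp_pos hcp hxS v)).1
    have hpos2 : ∀ v : H, 0 ≤ (⟪v, (T.τ (t - s) (x * star x)) v⟫).re := fun v => by
      have h := cp_pos hcp hxs v
      rw [star_star] at h
      simpa using (Complex.le_def.mp h).1
    -- the sequences for Cauchy-Schwarz
    set aN : ℕ → ℝ := fun n => ‖ω''.ξ n - p (ω''.ξ n)‖ with haN
    set bN : ℕ → ℝ := fun n => Real.sqrt ((⟪ω''.ξ n, (T.τ (t - s) (star x * x)) (ω''.ξ n)⟫).re)
      with hbN
    set dN : ℕ → ℝ := fun n =>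
      Real.sqrt ((⟪p (ω''.ξ n), (T.τ (t - s) (x * star x)) (p (ω''.ξ n))⟫).re) with hdN
    have ha2 : Summable fun n => aN n ^ 2 := by
      refine Summable.of_nonneg_of_le (fun n => sq_nonneg _) (fun n => ?_) hsumξ
      rw [haN]
      rw [proj_pyth hproj]
      nlinarith [sq_nonneg ‖p (ω''.ξ n)‖]
    have ha2sum : ∑' n, aN n ^ 2 = 1 - c := by
      calc (∑' n, aN n ^ 2) = ∑' n, (‖ω''.ξ n‖ ^ 2 - ‖p (ω''.ξ n)‖ ^ 2) :=
            tsum_congr fun n => proj_pyth hproj _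
        _ = 1 - c := by rw [Summable.tsum_sub hsumξ hsumpξ, ω''.norm_sum]
    have hb2 : Summable fun n => bN n ^ 2 := by
      refine (summable_inner_re hsumξ (T.τ (t - s) (star x * x))).congr fun n => ?_
      rw [hbN, Real.sq_sqrt (hpos1 _)]
    have hb2sum : ∑' n, bN n ^ 2 = (ω''.apply (T.τ (t - s) (star x * x))).re := by
      rw [re_apply]
      exact tsum_congr fun n => by rw [hbN, Real.sq_sqrt (hpos1 _)]
    have hd2 : Summable fun n => dN n ^ 2 := by
      refine (summable_inner_re hsumpξ (T.τ (t - s) (x * star x))).congr fun n => ?_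
      rw [hdN, Real.sq_sqrt (hpos2 _)]
    have hd2sum : ∑' n, dN n ^ 2 = (ω''.apply (p * T.τ (t - s) (x * star x) * p)).re := by
      rw [re_apply]
      apply tsum_congr
      intro n
      rw [hdN, Real.sq_sqrt (hpos2 _)]
      congr 1
      rw [show (p * T.τ (t - s) (x * star x) * p) (ω''.ξ n)
          = p ((T.τ (t - s) (x * star x)) (p (ω''.ξ n))) from rfl, ← proj_adjoint hproj]
    -- per-term Cauchy-Schwarz bounds
    have hbnd1 : ∀ n, ‖⟪ω''.ξ n - p (ω''.ξ n), (T.τ (t - s) x) (ω''.ξ n)⟫‖ ≤ aN n * bN n := by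
      intro n
      have h := cp_cs hS hcp hone hτ1 hone hxS (ω''.ξ n - p (ω''.ξ n)) (ω''.ξ n)
      simp only [star_one, one_mul] at h
      rw [hτ1] at h
      simp only [ContinuousLinearMap.one_apply] at h
      rw [re_inner_self] at h
      exact abs_le_of_sq_le (norm_nonneg _) (norm_nonneg _) h
    have hbnd2 : ∀ n, ‖⟪p (ω''.ξ n), (T.τ (t - s) x) (ω''.ξ n - p (ω''.ξ n))⟫‖
        ≤ dN n * aN n := by
      intro n
      have h := cp_cs hS hcp hone hτ1 hxs hone (p (ω''.ξ n)) (ω''.ξ n - p (ω''.ξ n))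
      simp only [star_star, mul_one, star_one] at h
      rw [hτ1] at h
      simp only [ContinuousLinearMap.one_apply] at h
      rw [re_inner_self] at h
      have h2 : ‖⟪p (ω''.ξ n), (T.τ (t - s) x) (ω''.ξ n - p (ω''.ξ n))⟫‖ ^ 2
          ≤ ‖ω''.ξ n - p (ω''.ξ n)‖ ^ 2
            * (⟪p (ω''.ξ n), (T.τ (t - s) (x * star x)) (p (ω''.ξ n))⟫).re := by
        nlinarith [h]
      have h3 := abs_le_of_sq_le (norm_nonneg _) (norm_nonneg _) h2
      rw [mul_comm] at h3
      exact h3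
    -- the difference as a tsum
    have hdiff_eq : ω''.apply (T.τ (t - s) x) - ω''.apply (p * T.τ (t - s) x * p)
        = ∑' n, (⟪ω''.ξ n - p (ω''.ξ n), (T.τ (t - s) x) (ω''.ξ n)⟫
            + ⟪p (ω''.ξ n), (T.τ (t - s) x) (ω''.ξ n - p (ω''.ξ n))⟫) := by
      have h1 : ω''.apply (p * T.τ (t - s) x * p) = ∑' n, ⟪p (ω''.ξ n),
          (T.τ (t - s) x) (p (ω''.ξ n))⟫ := by
        apply tsum_congr
        intro n
        rw [show (p * T.τ (t - s) x * p) (ω''.ξ n)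
            = p ((T.τ (t - s) x) (p (ω''.ξ n))) from rfl, ← proj_adjoint hproj]
      rw [h1, show ω''.apply (T.τ (t - s) x) = ∑' n, ⟪ω''.ξ n, (T.τ (t - s) x) (ω''.ξ n)⟫
        from rfl]
      rw [← Summable.tsum_sub (summable_inner hsumξ _) (summable_inner hsumpξ _)]
      apply tsum_congr
      intro n
      rw [inner_sub_left, map_sub, inner_sub_right]
      ring
    -- summability of the bounds
    have habN : Summable fun n => aN n * bN n :=
      summable_mul_of_sq ha2 hb2
    have hdaN : Summable fun n => dN n * aN n :=
      summable_mul_of_sq hd2 ha2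
    have hsummand : Summable fun n => ‖⟪ω''.ξ n - p (ω''.ξ n), (T.τ (t - s) x) (ω''.ξ n)⟫
        + ⟪p (ω''.ξ n), (T.τ (t - s) x) (ω''.ξ n - p (ω''.ξ n))⟫‖ := by
      refine Summable.of_nonneg_of_le (fun n => norm_nonneg _) (fun n => ?_) (habN.add hdaN)
      exact le_trans (norm_add_le _ _) (add_le_add (hbnd1 n) (hbnd2 n))
    -- the S12 estimate
    have hS12 : ‖ω''.apply (T.τ (t - s) x) - ω''.apply (p * T.τ (t - s) x * p)‖
        ≤ Real.sqrt (1 - c) * Real.sqrt ((ω''.apply (T.τ (t - s) (star x * x))).re)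
          + Real.sqrt ((ω''.apply (p * T.τ (t - s) (x * star x) * p)).re)
            * Real.sqrt (1 - c) := by
      rw [hdiff_eq]
      refine le_trans (norm_tsum_le_tsum_norm hsummand) ?_
      have hstep := Summable.tsum_le_tsum (fun n => le_trans (norm_add_le _ _)
        (add_le_add (hbnd1 n) (hbnd2 n))) hsummand (habN.add hdaN)
      refine le_trans hstep ?_
      rw [Summable.tsum_add habN hdaN]
      have e1 := tsum_cs (fun n => norm_nonneg (ω''.ξ n - p (ω''.ξ n)))
        (fun n => Real.sqrt_nonneg _) ha2 hb2
      have e2 := tsum_cs (fun n => Real.sqrt_nonneg _)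
        (fun n => norm_nonneg (ω''.ξ n - p (ω''.ξ n))) hd2 ha2
      rw [ha2sum, hb2sum] at e1
      rw [hd2sum, ha2sum] at e2
      exact add_le_add e1 e2
    -- B1 bound
    obtain ⟨ω₃, hω₃⟩ := T.normal (t - s) hr0 ω''
    have hB1le : (ω''.apply (T.τ (t - s) (star x * x))).re ≤ 1 := by
      rw [hω₃ (star x * x) hsxx]
      have h1 : ∀ n, (⟪ω₃.ξ n, (star x * x) (ω₃.ξ n)⟫).re = ‖x (ω₃.ξ n)‖ ^ 2 := by
        intro n
        have h2 : (star x * x) (ω₃.ξ n) = (ContinuousLinearMap.adjoint x) (x (ω₃.ξ n)) := by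
          rw [ContinuousLinearMap.mul_apply, ← ContinuousLinearMap.star_eq_adjoint]
        rw [h2, ContinuousLinearMap.adjoint_inner_right]
        exact re_inner_self _
      rw [re_apply, tsum_congr h1]
      have h3 : ∀ n, ‖x (ω₃.ξ n)‖ ^ 2 ≤ ‖ω₃.ξ n‖ ^ 2 := by
        intro n
        have h4 := x.le_opNorm (ω₃.ξ n)
        have h5 : ‖x (ω₃.ξ n)‖ ≤ ‖ω₃.ξ n‖ := by
          calc ‖x (ω₃.ξ n)‖ ≤ ‖x‖ * ‖ω₃.ξ n‖ := h4
            _ ≤ 1 * ‖ω₃.ξ n‖ := by gcongr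
            _ = ‖ω₃.ξ n‖ := one_mul _
        nlinarith [norm_nonneg (x (ω₃.ξ n))]
      have h6 := Summable.tsum_le_tsum h3 (Summable.of_nonneg_of_le (fun n => sq_nonneg _) h3
        ω₃.summable_sq) ω₃.summable_sq
      rwa [ω₃.norm_sum] at h6
    -- B2 bound via hypothesis (b)
    have hcutxx := cut_invariant hS hone T hp hproj hsub hr0 ω' hsupp' hxx
    have hsupxx := supported_apply hproj ω' hsupp' (T.τ (t - s) (p * (x * star x) * p))
    have hxxn : ‖x * star x‖ ≤ 1 := by
      calc ‖x * star x‖ ≤ ‖x‖ * ‖star x‖ := norm_mul_le _ _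
        _ = ‖x‖ * ‖x‖ := by rw [norm_star]
        _ ≤ 1 := by nlinarith [norm_nonneg x]
    have hhb2 := hT₀' (t - s) hrT (x * star x) hxx hxxn
    have hφ2 : ‖φ.apply (p * (x * star x) * p)‖ ≤ 1 :=
      le_trans (φ.apply_norm_le _) (le_trans (norm_pxp_le hproj _) hxxn)
    have hXle : (ω'.apply (T.τ (t - s) (x * star x))).re ≤ 1 + ε' := by
      rw [hcutxx, ← hsupxx]
      have h5 : ‖ω'.apply (p * T.τ (t - s) (p * (x * star x) * p) * p)‖ ≤ ε' + 1 := by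
        calc ‖ω'.apply (p * T.τ (t - s) (p * (x * star x) * p) * p)‖
            = ‖(ω'.apply (p * T.τ (t - s) (p * (x * star x) * p) * p)
                - φ.apply (p * (x * star x) * p)) + φ.apply (p * (x * star x) * p)‖ := by
              ring_nf
          _ ≤ ‖ω'.apply (p * T.τ (t - s) (p * (x * star x) * p) * p)
                - φ.apply (p * (x * star x) * p)‖ + ‖φ.apply (p * (x * star x) * p)‖ :=
              norm_add_le _ _
          _ ≤ ε' + 1 := add_le_add hhb2 hφ2
      calc (ω'.apply (p * T.τ (t - s) (p * (x * star x) * p) * p)).re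
          ≤ ‖ω'.apply (p * T.τ (t - s) (p * (x * star x) * p) * p)‖ := by
            exact Complex.re_le_norm _
        _ ≤ ε' + 1 := h5
        _ = 1 + ε' := by ring
    have hXpos : 0 ≤ (ω'.apply (T.τ (t - s) (x * star x))).re := by
      rw [re_apply]
      exact tsum_nonneg fun n => hpos2 _
    have hB2le : (ω''.apply (p * T.τ (t - s) (x * star x) * p)).re ≤ 1 + ε' := by
      rw [hω'apply (T.τ (t - s) (x * star x)), Complex.re_ofReal_mul]
      calc c * (ω'.apply (T.τ (t - s) (x * star x))).re ≤ 1 * (1 + ε') :=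
            mul_le_mul hc_le hXle hXpos (by norm_num)
        _ = 1 + ε' := one_mul _
    -- numeric bound for the S12 term
    have hS12' : ‖ω''.apply (T.τ (t - s) x) - ω''.apply (p * T.τ (t - s) x * p)‖ ≤ ε / 4 := by
      refine le_trans hS12 ?_
      have k1 : Real.sqrt (1 - c) ≤ Real.sqrt δ := Real.sqrt_le_sqrt (by linarith)
      have k2 : Real.sqrt ((ω''.apply (T.τ (t - s) (star x * x))).re) ≤ 1 := by
        have := Real.sqrt_le_sqrt hB1le
        simpa using this
      have k3 : Real.sqrt ((ω''.apply (p * T.τ (t - s) (x * star x) * p)).re) ≤ 3 / 2 := by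
        have h7 : (ω''.apply (p * T.τ (t - s) (x * star x) * p)).re ≤ (3 / 2 : ℝ) ^ 2 := by
          nlinarith [hB2le, hε'1]
        have h8 := Real.sqrt_le_sqrt h7
        rwa [Real.sqrt_sq (by norm_num : (0:ℝ) ≤ 3 / 2)] at h8
      have k4 : 0 ≤ Real.sqrt (1 - c) := Real.sqrt_nonneg _
      have k5 : 0 ≤ Real.sqrt ((ω''.apply (T.τ (t - s) (star x * x))).re) :=
        Real.sqrt_nonneg _
      have k6 : 0 ≤ Real.sqrt ((ω''.apply (p * T.τ (t - s) (x * star x) * p)).re) :=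
        Real.sqrt_nonneg _
      have k7 : 0 ≤ Real.sqrt δ := Real.sqrt_nonneg _
      nlinarith [hsqrtδ, hε]
    -- the key identity
    have hcutx := cut_invariant hS hone T hp hproj hsub hr0 ω' hsupp' hxS
    have hsupx := supported_apply hproj ω' hsupp' (T.τ (t - s) (p * x * p))
    have hkey : ω''.apply (p * T.τ (t - s) x * p)
        = ((c : ℝ) : ℂ) * ω'.apply (p * T.τ (t - s) (p * x * p) * p) := by
      rw [hω'apply (T.τ (t - s) x), hcutx, ← hsupx]
    have hmid := hT₀' (t - s) hrT x hxS hxn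
    have hφpxp : φ.apply (p * x * p) = φ.apply x := supported_apply hproj φ hφs x
    have hφn : ‖φ.apply (p * x * p)‖ ≤ 1 :=
      le_trans (φ.apply_norm_le _) (le_trans (norm_pxp_le hproj x) hxn)
    have hdecomp2 : ω.apply (T.τ t x) - φ.apply x
        = (ω''.apply (T.τ (t - s) x) - ω''.apply (p * T.τ (t - s) x * p))
          + (((c : ℝ) : ℂ) * (ω'.apply (p * T.τ (t - s) (p * x * p) * p)
              - φ.apply (p * x * p))
            + (((c : ℝ) : ℂ) - 1) * φ.apply (p * x * p)) := by
      rw [hA, ← hφpxp, hkey]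
      ring
    have hnc : ‖((c : ℝ) : ℂ)‖ ≤ 1 := by
      rw [Complex.norm_real, Real.norm_eq_abs, abs_of_nonneg hcpos.le]
      exact hc_le
    have hnc1 : ‖((c : ℝ) : ℂ) - 1‖ ≤ δ := by
      have h9 : ((c : ℝ) : ℂ) - 1 = (((c - 1 : ℝ)) : ℂ) := by push_cast; ring
      rw [h9, Complex.norm_real, Real.norm_eq_abs, abs_of_nonpos (by linarith)]
      linarith
    rw [hdecomp2]
    calc ‖(ω''.apply (T.τ (t - s) x) - ω''.apply (p * T.τ (t - s) x * p))
          + (((c : ℝ) : ℂ) * (ω'.apply (p * T.τ (t - s) (p * x * p) * p)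
              - φ.apply (p * x * p))
            + (((c : ℝ) : ℂ) - 1) * φ.apply (p * x * p))‖
        ≤ ‖ω''.apply (T.τ (t - s) x) - ω''.apply (p * T.τ (t - s) x * p)‖
          + (‖((c : ℝ) : ℂ)‖ * ‖ω'.apply (p * T.τ (t - s) (p * x * p) * p)
              - φ.apply (p * x * p)‖
            + ‖((c : ℝ) : ℂ) - 1‖ * ‖φ.apply (p * x * p)‖) := by
          refine le_trans (norm_add_le _ _) ?_
          gcongr
          refine le_trans (norm_add_le _ _) ?_
          rw [norm_mul, norm_mul]
      _ ≤ ε / 4 + (1 * ε' + δ * 1) := by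
          have m2 : ‖((c : ℝ) : ℂ)‖ * ‖ω'.apply (p * T.τ (t - s) (p * x * p) * p)
              - φ.apply (p * x * p)‖ ≤ 1 * ε' :=
            mul_le_mul hnc hmid (norm_nonneg _) (by norm_num)
          have m3 : ‖((c : ℝ) : ℂ) - 1‖ * ‖φ.apply (p * x * p)‖ ≤ δ * 1 :=
            mul_le_mul hnc1 hφn (norm_nonneg _) hδpos.le
          linarith [hS12', m2, m3]
      _ ≤ ε := by linarith [hε'le, hδε4]

end Paper
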